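/- Let t > 0, let z₁ ≥ 1 be real, and let x = −3t(1 + z₁⁴)/z₁². Then for every z = z₁ + u + iv with u ≥ 0 and 0 ≤ v ≤ u, one has Re[ i(8t(z − 1)³ + 2(x + 6t)(z − 1)) ] ≤ −16 t u² v. -/

import Mathlib

/-- Let `t > 0`, `z₁ ≥ 1`, and `x = −3t(1 + z₁⁴)/z₁²` (so that `z₁` is a saddle
point of the mKdV phase). Then for every `z = z₁ + u + iv` with `u ≥ 0` and
`0 ≤ v ≤ u`, one has `Re[i(8t(z − 1)³ + 2(x + 6t)(z − 1))] ≤ −16tu²v`. -/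
theorem re_cubic_model_phase_estimate (t : ℝ) (ht : 0 < t)
    (z₁ : ℝ) (hz₁ : 1 ≤ z₁) (x : ℝ) (hx : x = -3 * t * (1 + z₁ ^ 4) / z₁ ^ 2)
    (u v : ℝ) (hu : 0 ≤ u) (hv0 : 0 ≤ v) (hvu : v ≤ u) :
    (Complex.I * (8 * (t : ℂ) * ((((z₁ + u : ℝ) : ℂ) + v * Complex.I) - 1) ^ 3 +
        2 * ((x : ℂ) + 6 * t) * ((((z₁ + u : ℝ) : ℂ) + v * Complex.I) - 1))).re ≤
      -16 * t * u ^ 2 * v := by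
  have hz0 : (0:ℝ) < z₁ ^ 2 := by positivity
  have hc : (x + 6 * t) * z₁ ^ 2 = -3 * t * (z₁ ^ 2 - 1) ^ 2 := by
    rw [hx, add_mul, div_mul_cancel₀ _ hz0.ne']; ring
  have hre : (Complex.I * (8 * (t : ℂ) * ((((z₁ + u : ℝ) : ℂ) + v * Complex.I) - 1) ^ 3 +
        2 * ((x : ℂ) + 6 * t) * ((((z₁ + u : ℝ) : ℂ) + v * Complex.I) - 1))).re
      = -8 * t * (3 * (z₁ - 1 + u) ^ 2 * v - v ^ 3) - 2 * (x + 6 * t) * v := by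
    simp [Complex.ext_iff, pow_succ, Complex.mul_re, Complex.mul_im,
      Complex.add_re, Complex.add_im, Complex.sub_re, Complex.sub_im]
    ring
  rw [hre]
  rw [show (-8 * t * (3 * (z₁ - 1 + u) ^ 2 * v - v ^ 3) - 2 * (x + 6 * t) * v ≤ -16 * t * u ^ 2 * v)
      ↔ (-8 * t * (3 * (z₁ - 1 + u) ^ 2 * v - v ^ 3) - 2 * (x + 6 * t) * v) * z₁ ^ 2
        ≤ (-16 * t * u ^ 2 * v) * z₁ ^ 2 from (mul_le_mul_iff_of_pos_right hz0).symm]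
  have ha2 : z₁ - 1 ≥ 0 := by linarith
  have hcv : (x + 6 * t) * z₁ ^ 2 * v = -3 * t * (z₁ ^ 2 - 1) ^ 2 * v := by
    rw [hc]
  nlinarith [hcv,
    mul_nonneg (mul_nonneg (mul_nonneg ht.le hv0)
      (mul_nonneg (by linarith : (0:ℝ) ≤ u - v) (by linarith : (0:ℝ) ≤ u + v))) hz0.le,
    mul_nonneg (mul_nonneg (mul_nonneg (mul_nonneg ht.le hv0) ha2) hu) hz0.le,
    mul_nonneg (mul_nonneg (mul_nonneg ht.le hv0)
      (mul_nonneg (mul_nonneg ha2 ha2) ha2)) (by linarith : (0:ℝ) ≤ 3 * z₁ + 1),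
    mul_nonneg (mul_nonneg (mul_nonneg (mul_nonneg ht.le hv0) (sq_nonneg u)) ha2)
      (by linarith : (0:ℝ) ≤ z₁ + 1),
    mul_nonneg (mul_nonneg (mul_nonneg ht.le hv0) (sq_nonneg u)) (sq_nonneg (z₁ - 1))]
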